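/- arXiv:2302.00970 — 2 statements merged into one kernel-verified Lean document; each statement's English description precedes it below -/
import Mathlib

section
/- Let q ≥ 2 and let μ_q := {ζ ∈ ℂ : ζ^q = 1}. For i ∈ {1,2,3} and ζ ∈ μ_q, define the linear form ℓ_{i,ζ} on ℂ^4 by ℓ_{i,ζ}(z_1,z_2,z_3,z_4) = z_i − ζ·z_4. Let p ∈ ℂ^4 be a point such that for every i ∈ {1,2,3} it is not the case that p_i = 0 and p_4 = 0 (i.e., p lies outside the union of the cones over the three lines C_i = {z_i = z_4 = 0}). Then the family of those linear forms ℓ_{i,ζ} (i ∈ {1,2,3}, ζ ∈ μ_q) that vanish at p is linearly independent over ℂ. -/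
open MvPolynomial

/-- Normal crossings of the union of the three hypersurfaces `{z_i^q = z_4^q}` in `ℂ^4`
outside the cones over the lines `C_i = {z_i = z_4 = 0}`: at any point `p` outside
`⋃ C_i`-cones, the linear forms `ℓ_{i,ζ} = z_i − ζ z_4` (with `ζ^q = 1`) vanishing at `p`
are linearly independent over `ℂ`. -/
theorem linear_forms_vanishing_at_p_linearIndependent (q : ℕ) (hq : 2 ≤ q)
    (p : Fin 4 → ℂ) (hp : ∀ i : Fin 3, ¬ (p i.castSucc = 0 ∧ p 3 = 0)) :
    LinearIndependent ℂ
      (fun s : {iζ : Fin 3 × ℂ //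
          iζ.2 ^ q = 1 ∧ eval p (X iζ.1.castSucc - C iζ.2 * X 3) = 0} =>
        (X s.1.1.castSucc - C s.1.2 * X 3 : MvPolynomial (Fin 4) ℂ)) := by
  classical
  set ψ : MvPolynomial (Fin 4) ℂ →ₗ[ℂ] (Fin 3 → ℂ) :=
    { toFun := fun P i => coeff (Finsupp.single i.castSucc 1) P
      map_add' := by intros; funext i; simp [coeff_add]
      map_smul' := by intros; funext i; simp [coeff_smul] } with hψ
  apply LinearIndependent.of_comp ψ
  have key : ∀ (i : Fin 3) (ζ : ℂ),
      ψ (X i.castSucc - C ζ * X 3) = Pi.single i (1 : ℂ) := by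
    intro i ζ
    funext j
    have hne : ((3 : Fin 4)) ≠ j.castSucc := by
      have := j.isLt
      simp [Fin.ext_iff]
      omega
    have h3 : (Finsupp.single (3 : Fin 4) 1 : Fin 4 →₀ ℕ) ≠ Finsupp.single j.castSucc 1 :=
      fun h => hne (Finsupp.single_left_injective one_ne_zero h)
    have hcast : ((Finsupp.single (i.castSucc : Fin 4) 1 : Fin 4 →₀ ℕ) =
        Finsupp.single j.castSucc 1) ↔ j = i := by
      constructor
      · intro h
        exact (Fin.castSucc_injective 3 (Finsupp.single_left_injective one_ne_zero h)).symm
      · rintro rfl; rfl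
    simp [hψ, coeff_sub, coeff_C_mul, coeff_X', h3, hcast, Pi.single_apply]
  have hcomp : (ψ ∘ fun s : {iζ : Fin 3 × ℂ //
          iζ.2 ^ q = 1 ∧ eval p (X iζ.1.castSucc - C iζ.2 * X 3) = 0} =>
        (X s.1.1.castSucc - C s.1.2 * X 3 : MvPolynomial (Fin 4) ℂ))
      = fun s => Pi.single s.1.1 (1 : ℂ) := by
    funext s; exact key s.1.1 s.1.2
  rw [hcomp]
  have hinj : Function.Injective (fun s : {iζ : Fin 3 × ℂ //
          iζ.2 ^ q = 1 ∧ eval p (X iζ.1.castSucc - C iζ.2 * X 3) = 0} => s.1.1) := by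
    rintro ⟨⟨i, ζ⟩, _, hs⟩ ⟨⟨i', ζ'⟩, _, ht⟩ h
    simp only at h
    subst h
    have hs' : p i.castSucc - ζ * p 3 = 0 := by simpa using hs
    have ht' : p i.castSucc - ζ' * p 3 = 0 := by simpa using ht
    have hp3 : p 3 ≠ 0 := by
      intro h0
      exact hp i ⟨by rw [h0, mul_zero] at hs'; linear_combination hs', h0⟩
    have : ζ = ζ' :=
      mul_right_cancel₀ hp3 ((sub_eq_zero.mp hs').symm.trans (sub_eq_zero.mp ht'))
    simp [this]
  have hb := (Pi.basisFun ℂ (Fin 3)).linearIndependent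
  have := hb.comp _ hinj
  convert this using 1
  funext s
  simp [Pi.basisFun_apply]
end

section
/- Let q ≥ 2 and let μ_q := {ζ ∈ ℂ : ζ^q = 1}. Consider the following family of polynomials in ℂ[x,y,z]: the coordinates x and y, together with xyz − η for η ∈ μ_q, yz − ζ for ζ ∈ μ_q, and xz − ξ for ξ ∈ μ_q. Then for every point p ∈ ℂ^3, the gradients at p of those members of the family that vanish at p form a linearly independent family of vectors in ℂ^3. -/
open MvPolynomial

/-- The family of polynomials `x, y, xyz − η (η^q = 1), yz − ζ (ζ^q = 1), xz − ξ (ξ^q = 1)`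
in `ℂ[x,y,z]`: the irreducible factors of the local equations of the divisor `X̃` in the
first chart of the second blow-up in the variant of Hironaka's example. -/
noncomputable def hironakaChart1Family (q : ℕ) :
    Fin 2 ⊕ Fin 3 × {ζ : ℂ // ζ ^ q = 1} → MvPolynomial (Fin 3) ℂ :=
  fun i => match i with
  | .inl j => if j = 0 then X 0 else X 1
  | .inr (j, ζ) =>
      if j = 0 then X 0 * X 1 * X 2 - C ζ.1
      else if j = 1 then X 1 * X 2 - C ζ.1
      else X 0 * X 2 - C ζ.1

/-- At every point `p ∈ ℂ^3`, the gradients of those members of the family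
`x, y, xyz − η, yz − ζ, xz − ξ` (with `η, ζ, ξ` ranging over the `q`-th roots of unity)
that vanish at `p` are linearly independent over `ℂ`: the divisor `X̃` has normal
crossings throughout this chart. -/
theorem hironaka_chart1_normal_crossings (q : ℕ) (hq : 2 ≤ q) (p : Fin 3 → ℂ) :
    LinearIndependent ℂ
      (fun s : {i : Fin 2 ⊕ Fin 3 × {ζ : ℂ // ζ ^ q = 1} //
          eval p (hironakaChart1Family q i) = 0} =>
        fun j : Fin 3 => eval p (pderiv j (hironakaChart1Family q s.1))) := by
  classical
  have hq0 : q ≠ 0 := by omega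
  have hroot : ∀ ζ : {ζ : ℂ // ζ ^ q = 1}, (ζ : ℂ) ≠ 0 := by
    rintro ⟨ζ, hζ⟩ h0
    rw [Subtype.coe_mk] at h0
    rw [h0, zero_pow hq0] at hζ
    exact zero_ne_one hζ
  have fin2cases : ∀ j : Fin 2, j = 0 ∨ j = 1 := by decide
  have fin3cases : ∀ j : Fin 3, j = 0 ∨ j = 1 ∨ j = 2 := by decide
  have eA : hironakaChart1Family q (Sum.inl 0) = X 0 := rfl
  have eB : hironakaChart1Family q (Sum.inl 1) = X 1 := rfl
  have eC : ∀ ζ, hironakaChart1Family q (Sum.inr (0, ζ)) = X 0 * X 1 * X 2 - C ζ.1 :=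
    fun _ => rfl
  have eD : ∀ ζ, hironakaChart1Family q (Sum.inr (1, ζ)) = X 1 * X 2 - C ζ.1 :=
    fun _ => rfl
  have eE : ∀ ζ, hironakaChart1Family q (Sum.inr (2, ζ)) = X 0 * X 2 - C ζ.1 :=
    fun _ => rfl
  let w : Fin 3 → Fin 3 → ℂ :=
    ![if p 0 = 0 ∨ p 1 = 0 ∨ p 2 = 0 then ![1, 0, 0] else ![p 1 * p 2, p 0 * p 2, p 0 * p 1],
      if p 1 = 0 ∨ p 2 = 0 then ![0, 1, 0] else ![0, p 2, p 1],
      if p 0 = 0 ∨ p 2 = 0 then ![0, 0, 1] else ![p 2, 0, p 0]]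
  have hw : LinearIndependent ℂ w := by
    have hU : IsUnit (Matrix.of w) := by
      rw [Matrix.isUnit_iff_isUnit_det, isUnit_iff_ne_zero]
      rcases eq_or_ne (p 0) 0 with h1 | h1 <;> rcases eq_or_ne (p 1) 0 with h2 | h2 <;>
        rcases eq_or_ne (p 2) 0 with h3 | h3 <;>
        simp [w, Matrix.det_fin_three, h1, h2, h3] <;>
        ring_nf <;>
        simp [h1, h2, h3, pow_eq_zero_iff, mul_eq_zero]
    exact Matrix.linearIndependent_rows_iff_isUnit.mpr hU
  let f : {i : Fin 2 ⊕ Fin 3 × {ζ : ℂ // ζ ^ q = 1} //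
      eval p (hironakaChart1Family q i) = 0} → Fin 3 :=
    fun s => Sum.elim (![0, 1]) (fun x => x.1) s.1
  have hf : Function.Injective f := by
    rintro ⟨s, hs⟩ ⟨t, ht⟩ h
    apply Subtype.ext
    simp only []
    rcases s with j | ⟨j, ζ⟩ <;> rcases t with k | ⟨k, ξ⟩ <;>
      simp only [f, Sum.elim_inl, Sum.elim_inr] at h
    · rcases fin2cases j with rfl | rfl <;> rcases fin2cases k with rfl | rfl <;>
        first | rfl | exact absurd h (by decide)
    · exfalso
      rcases fin2cases j with rfl | rfl <;> rcases fin3cases k with rfl | rfl | rfl <;>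
        first
        | exact absurd h (by decide)
        | (rw [eA] at hs; rw [eC ξ] at ht;
           rw [eval_X] at hs
           rw [map_sub, eval_mul, eval_mul, eval_X, eval_X, eval_X, eval_C, sub_eq_zero] at ht
           exact hroot ξ (by rw [← ht, hs]; ring))
        | (rw [eB] at hs; rw [eD ξ] at ht;
           rw [eval_X] at hs
           rw [map_sub, eval_mul, eval_X, eval_X, eval_C, sub_eq_zero] at ht
           exact hroot ξ (by rw [← ht, hs]; ring))
    · exfalso
      rcases fin2cases k with rfl | rfl <;> rcases fin3cases j with rfl | rfl | rfl <;>
        first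
        | exact absurd h (by decide)
        | (rw [eA] at ht; rw [eC ζ] at hs;
           rw [eval_X] at ht
           rw [map_sub, eval_mul, eval_mul, eval_X, eval_X, eval_X, eval_C, sub_eq_zero] at hs
           exact hroot ζ (by rw [← hs, ht]; ring))
        | (rw [eB] at ht; rw [eD ζ] at hs;
           rw [eval_X] at ht
           rw [map_sub, eval_mul, eval_X, eval_X, eval_C, sub_eq_zero] at hs
           exact hroot ζ (by rw [← hs, ht]; ring))
    · rcases h with rfl
      suffices hzx : ζ = ξ by rw [hzx]
      rcases fin3cases j with rfl | rfl | rfl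
      · rw [eC ζ, map_sub, eval_mul, eval_mul, eval_X, eval_X, eval_X, eval_C,
          sub_eq_zero] at hs
        rw [eC ξ, map_sub, eval_mul, eval_mul, eval_X, eval_X, eval_X, eval_C,
          sub_eq_zero] at ht
        exact Subtype.ext (hs.symm.trans ht)
      · rw [eD ζ, map_sub, eval_mul, eval_X, eval_X, eval_C, sub_eq_zero] at hs
        rw [eD ξ, map_sub, eval_mul, eval_X, eval_X, eval_C, sub_eq_zero] at ht
        exact Subtype.ext (hs.symm.trans ht)
      · rw [eE ζ, map_sub, eval_mul, eval_X, eval_X, eval_C, sub_eq_zero] at hs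
        rw [eE ξ, map_sub, eval_mul, eval_X, eval_X, eval_C, sub_eq_zero] at ht
        exact Subtype.ext (hs.symm.trans ht)
  have hveq : (fun s : {i : Fin 2 ⊕ Fin 3 × {ζ : ℂ // ζ ^ q = 1} //
          eval p (hironakaChart1Family q i) = 0} =>
        fun j : Fin 3 => eval p (pderiv j (hironakaChart1Family q s.1))) = w ∘ f := by
    funext s
    obtain ⟨i, hs⟩ := s
    rcases i with j | ⟨j, ζ⟩
    · rcases fin2cases j with rfl | rfl
      · rw [eA, eval_X] at hs
        funext k
        rcases fin3cases k with rfl | rfl | rfl <;>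
          simp [w, f, hs, eA, pderiv_X]
      · rw [eB, eval_X] at hs
        funext k
        rcases fin3cases k with rfl | rfl | rfl <;>
          simp [w, f, hs, eB, pderiv_X]
    · rcases fin3cases j with rfl | rfl | rfl
      · rw [eC ζ, map_sub, eval_mul, eval_mul, eval_X, eval_X, eval_X, eval_C,
          sub_eq_zero] at hs
        have h1 : p 0 ≠ 0 := fun h => hroot ζ (by rw [← hs, h]; ring)
        have h2 : p 1 ≠ 0 := fun h => hroot ζ (by rw [← hs, h]; ring)
        have h3 : p 2 ≠ 0 := fun h => hroot ζ (by rw [← hs, h]; ring)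
        funext k
        rcases fin3cases k with rfl | rfl | rfl <;>
          simp [w, f, eC, h1, h2, h3, pderiv_mul, pderiv_X, pderiv_C] <;> ring
      · rw [eD ζ, map_sub, eval_mul, eval_X, eval_X, eval_C, sub_eq_zero] at hs
        have h2 : p 1 ≠ 0 := fun h => hroot ζ (by rw [← hs, h]; ring)
        have h3 : p 2 ≠ 0 := fun h => hroot ζ (by rw [← hs, h]; ring)
        funext k
        rcases fin3cases k with rfl | rfl | rfl <;>
          simp [w, f, eD, h2, h3, pderiv_mul, pderiv_X, pderiv_C] <;> ring
      · rw [eE ζ, map_sub, eval_mul, eval_X, eval_X, eval_C, sub_eq_zero] at hs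
        have h1 : p 0 ≠ 0 := fun h => hroot ζ (by rw [← hs, h]; ring)
        have h3 : p 2 ≠ 0 := fun h => hroot ζ (by rw [← hs, h]; ring)
        funext k
        rcases fin3cases k with rfl | rfl | rfl <;>
          simp [w, f, eE, h1, h3, pderiv_mul, pderiv_X, pderiv_C] <;> ring
  rw [hveq]
  exact hw.comp f hf
end
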